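/- Let A be a unital semisimple commutative Banach algebra and B a unital commutative Banach algebra. If T : A⁻¹ → B⁻¹ is a surjective group homomorphism such that σ(Tf) = σ(f) for every f ∈ A⁻¹, then T is injective. -/

import Mathlib

open scoped Pointwise

theorem stmt12 {A B : Type*} [NormedCommRing A] [NormedAlgebra ℂ A] [CompleteSpace A]
    [NormedCommRing B] [NormedAlgebra ℂ B] [CompleteSpace B]
    (hA : ∀ a : A, spectralRadius ℂ a = 0 → a = 0)
    (T : Aˣ → Bˣ) (hsurj : Function.Surjective T)
    (hmul : ∀ f g : Aˣ, T (f * g) = T f * T g)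
    (h : ∀ f : Aˣ, spectrum ℂ ((T f : B)) = spectrum ℂ ((f : A))) :
    Function.Injective T := by
  intro f g hfg
  have h1 : T 1 = 1 := by
    have h11 := hmul 1 1
    rw [one_mul] at h11
    exact (mul_eq_left.mp h11.symm)
  have hTu : T (f * g⁻¹) = 1 := by
    have : T (f * g⁻¹) * T g = T g := by
      rw [← hmul, inv_mul_cancel_right, hfg]
    exact mul_right_cancel (by rw [this, one_mul])
  set u : A := ((f * g⁻¹ : Aˣ) : A) with hu
  have hspec : spectrum ℂ u ⊆ {1} := by
    rw [← h, hTu, Units.val_one]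
    intro z hz
    by_contra hne
    have : IsUnit (algebraMap ℂ B z - 1) := by
      rw [← map_one (algebraMap ℂ B), ← map_sub]
      exact (isUnit_iff_ne_zero.mpr (sub_ne_zero.mpr hne)).map (algebraMap ℂ B)
    exact (spectrum.mem_iff.mp hz) this
  have hsub : spectrum ℂ (u - 1) ⊆ {0} := by
    have : spectrum ℂ (u - algebraMap ℂ A 1) = spectrum ℂ u - {(1:ℂ)} :=
      (spectrum.sub_singleton_eq u 1).symm
    rw [map_one] at this
    rw [this]
    intro z hz
    obtain ⟨x, hx, y, hy, rfl⟩ := hz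
    simp only [Set.mem_singleton_iff] at hy ⊢
    have := hspec hx
    simp only [Set.mem_singleton_iff] at this
    simp [this, hy]
  have hrad : spectralRadius ℂ (u - 1) = 0 := by
    refine le_antisymm ?_ zero_le
    rw [spectralRadius]
    refine iSup₂_le fun k hk => ?_
    have : k = 0 := hsub hk
    simp [this]
  have := hA _ hrad
  have huone : u = 1 := by rwa [sub_eq_zero] at this
  have : f * g⁻¹ = 1 := Units.ext (by rw [Units.val_one]; exact huone)
  calc f = f * g⁻¹ * g := by rw [inv_mul_cancel_right]
  _ = g := by rw [this, one_mul]
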